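/- There is a series ∑ y_i in c₀ which is weakly unconditionally Cauchy but not unconditionally convergent, and such that for every integer k ≥ 2 the series ∑ y_i^{⊗k} of diagonal tensors is unconditionally Cauchy in the k-fold algebraic tensor product ⊗^k c₀ with respect to the projective seminorm: for every ε > 0 there exists N ∈ ℕ such that for every finite set F of indices all greater than N, π(∑_{j∈F} y_j^{⊗k}) < ε. One such series is given by y_i = eₙ/n whenever n(n−1)/2 < i ≤ n(n+1)/2. -/

import Mathlib

open Filter Topology Metric

noncomputable section

/-- The Banach space `c₀` of real sequences converging to zero, with the sup norm. -/
abbrev c0 : Type := ZeroAtInftyContinuousMap ℕ ℝ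

/-- The unit vector basis of `c₀`. -/
def e (n : ℕ) : c0 :=
  { toFun := fun i => if i = n then (1 : ℝ) else 0
    continuous_toFun := continuous_of_discreteTopology
    zero_at_infty' := by
      rw [Filter.cocompact_eq_cofinite]
      refine tendsto_const_nhds.congr' ?_
      have h : {n}ᶜ ∈ (Filter.cofinite : Filter ℕ) := by simp [Filter.cofinite]
      filter_upwards [h] with i hi
      simp only [Set.mem_compl_iff, Set.mem_singleton_iff] at hi
      simp [hi] }

/-- A series `∑ xₙ` is weakly unconditionally Cauchy (w.u.C.) if `∑ |φ (xₙ)| < ∞` for every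
continuous linear functional `φ`. -/
def WUC {X : Type*} [NormedAddCommGroup X] [NormedSpace ℝ X] (x : ℕ → X) : Prop :=
  ∀ φ : X →L[ℝ] ℝ, Summable fun n => |φ (x n)|

/-- A sequence is equivalent to the unit vector basis of `c₀`: there are `0 < c ≤ C` with
`c · maxᵢ |aᵢ| ≤ ‖∑ aᵢ xᵢ‖ ≤ C · maxᵢ |aᵢ|` for all finite scalar families. -/
def IsEquivC0Basis {X : Type*} [NormedAddCommGroup X] [NormedSpace ℝ X] (x : ℕ → X) : Prop :=
  ∃ c C : ℝ, 0 < c ∧ c ≤ C ∧ ∀ (n : ℕ) (a : ℕ → ℝ),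
    c * (⨆ i : Fin n, |a i|) ≤ ‖∑ i ∈ Finset.range n, a i • x i‖ ∧
    ‖∑ i ∈ Finset.range n, a i • x i‖ ≤ C * (⨆ i : Fin n, |a i|)

/-- A map (polynomial) is unconditionally converging if for every w.u.C. series `∑ xₙ` the
sequence of values at the partial sums converges in norm. -/
def UCPoly {X Y : Type*} [NormedAddCommGroup X] [NormedSpace ℝ X]
    [NormedAddCommGroup Y] [NormedSpace ℝ Y] (P : X → Y) : Prop :=
  ∀ x : ℕ → X, WUC x →
    ∃ L : Y, Tendsto (fun n => P (∑ i ∈ Finset.range n, x i)) atTop (𝓝 L)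

/-- An operator is unconditionally converging if it maps w.u.C. series to unconditionally
convergent series. -/
def UCOp {X Y : Type*} [NormedAddCommGroup X] [NormedSpace ℝ X]
    [NormedAddCommGroup Y] [NormedSpace ℝ Y] (T : X → Y) : Prop :=
  ∀ x : ℕ → X, WUC x → Summable fun n => T (x n)

/-- A map (polynomial or operator) is compact if the image of the closed unit ball is
relatively norm compact. -/
def CompactMap {X Y : Type*} [NormedAddCommGroup X] [NormedSpace ℝ X]
    [NormedAddCommGroup Y] [NormedSpace ℝ Y] (P : X → Y) : Prop :=
  IsCompact (closure (P '' Metric.closedBall 0 1))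

/-- A set is relatively weakly compact if its closure in the weak topology is compact. -/
def RelWeakCompact {Y : Type*} [NormedAddCommGroup Y] [NormedSpace ℝ Y] (s : Set Y) : Prop :=
  IsCompact (closure ((toWeakSpace ℝ Y) '' s))

/-- A WUC-set is the image of the closed unit ball of `c₀` under a bounded operator. -/
def IsWUCSet {X : Type*} [NormedAddCommGroup X] [NormedSpace ℝ X] (s : Set X) : Prop :=
  ∃ T : c0 →L[ℝ] X, s = ⇑T '' Metric.closedBall 0 1

lemma e_apply (n i : ℕ) : e n i = if i = n then (1:ℝ) else 0 := rfl

lemma c0_sum_apply {ι : Type*} (S : Finset ι) (f : ι → c0) (j : ℕ) :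
    (∑ i ∈ S, f i) j = ∑ i ∈ S, f i j := by
  induction S using Finset.cons_induction with
  | empty => simp [ZeroAtInftyContinuousMap.coe_zero]
  | cons a s ha ih => rw [Finset.sum_cons, Finset.sum_cons, ZeroAtInftyContinuousMap.coe_add, Pi.add_apply, ih]

lemma comb_apply (S : Finset ℕ) (c : ℕ → ℝ) (j : ℕ) :
    (∑ n ∈ S, c n • e n) j = if j ∈ S then c j else 0 := by
  rw [c0_sum_apply]
  have : ∀ n ∈ S, (c n • e n) j = if n = j then c n else 0 := by
    intro n _
    rw [ZeroAtInftyContinuousMap.coe_smul, Pi.smul_apply, e_apply]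
    by_cases h : j = n <;> simp [h, eq_comm]
  rw [Finset.sum_congr rfl this, Finset.sum_ite_eq']

lemma norm_comb_le (S : Finset ℕ) (c : ℕ → ℝ) (C : ℝ) (hC : 0 ≤ C) (h : ∀ n ∈ S, |c n| ≤ C) :
    ‖∑ n ∈ S, c n • e n‖ ≤ C := by
  rw [← ZeroAtInftyContinuousMap.norm_toBCF_eq_norm]
  refine (BoundedContinuousFunction.norm_le hC).2 fun j => ?_
  have : (∑ n ∈ S, c n • e n).toBCF j = (∑ n ∈ S, c n • e n) j := rfl
  rw [this, comb_apply]
  split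
  · rw [Real.norm_eq_abs]; exact h j ‹_›
  · simpa using hC

lemma norm_e (n : ℕ) : ‖e n‖ = 1 := by
  refine le_antisymm ?_ ?_
  · have := norm_comb_le {n} (fun _ => 1) 1 zero_le_one (by simp)
    simpa using this
  · have h1 : |e n n| ≤ ‖e n‖ := by
      rw [← ZeroAtInftyContinuousMap.norm_toBCF_eq_norm]
      exact (BoundedContinuousFunction.norm_coe_le_norm (e n).toBCF n)
    simpa [e_apply] using h1

def T (n : ℕ) : ℕ := ∑ i ∈ Finset.range (n+1), i

lemma T_succ (n : ℕ) : T (n+1) = T n + (n+1) := Finset.sum_range_succ _ _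

lemma T_strictMono : StrictMono T := strictMono_nat_of_lt_succ (fun n => by rw [T_succ]; omega)

lemma T_eq (n : ℕ) : T n = n * (n+1) / 2 := by
  rw [T, Finset.sum_range_id, Nat.add_sub_cancel, Nat.mul_comm]

lemma T_pred (n : ℕ) (hn : 1 ≤ n) : T (n-1) = n * (n-1) / 2 := by
  obtain ⟨m, rfl⟩ : ∃ m, n = m + 1 := ⟨n-1, by omega⟩
  rw [Nat.add_sub_cancel, T_eq, Nat.mul_comm]

lemma le_T_self (n : ℕ) : n ≤ T n := Finset.single_le_sum (f := id) (fun i _ => Nat.zero_le i) (Finset.self_mem_range_succ n)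

def nu (i : ℕ) : ℕ := Nat.find (⟨i, le_T_self i⟩ : ∃ n, i ≤ T n)

lemma le_T_nu (i : ℕ) : i ≤ T (nu i) := Nat.find_spec (⟨i, le_T_self i⟩ : ∃ n, i ≤ T n)

lemma T_lt_of_lt_nu {i m : ℕ} (h : m < nu i) : T m < i := by
  have := Nat.find_min (⟨i, le_T_self i⟩ : ∃ n, i ≤ T n) h
  omega

lemma nu_le {i n : ℕ} (h : i ≤ T n) : nu i ≤ n := Nat.find_le h

lemma nu_block {i n : ℕ} (hn : 1 ≤ n) : nu i = n ↔ (T (n-1) < i ∧ i ≤ T n) := by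
  constructor
  · rintro rfl
    exact ⟨T_lt_of_lt_nu (by omega), le_T_nu i⟩
  · rintro ⟨h1, h2⟩
    refine le_antisymm (nu_le h2) ?_
    by_contra h
    push_neg at h
    have h3 : nu i ≤ n - 1 := by omega
    have := (le_T_nu i).trans (T_strictMono.monotone h3)
    omega

lemma nu_eq {i n : ℕ} (h1 : n * (n-1) / 2 < i) (h2 : i ≤ n * (n+1)/2) : nu i = n := by
  have hn1 : 1 ≤ n := by
    rcases n with _|n
    · simp at h1; omega
    · omega
  rw [← T_eq] at h2
  rw [← T_pred n hn1] at h1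
  exact (nu_block hn1).2 ⟨h1, h2⟩

lemma one_le_nu {i : ℕ} (hi : 1 ≤ i) : 1 ≤ nu i := by
  by_contra h
  push_neg at h
  interval_cases h' : nu i
  · have := le_T_nu i; rw [h'] at this; simp [T] at this; omega

lemma nu_pos_gt {i N : ℕ} (h : T N < i) : N < nu i := by
  by_contra hc
  push_neg at hc
  have := (le_T_nu i).trans (T_strictMono.monotone hc)
  omega

lemma block_card (n : ℕ) (hn : 1 ≤ n) : (Finset.Ioc (T (n-1)) (T n)).card = n := by
  rw [Nat.card_Ioc]
  obtain ⟨m, rfl⟩ : ∃ m, n = m + 1 := ⟨n-1, by omega⟩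
  rw [Nat.add_sub_cancel, T_succ]; omega

def Y (i : ℕ) : c0 := ((nu i : ℝ))⁻¹ • e (nu i)

lemma absSum_le (φ : c0 →L[ℝ] ℝ) (S : Finset ℕ) : ∑ n ∈ S, |φ (e n)| ≤ ‖φ‖ := by
  set s : ℕ → ℝ := fun n => if 0 ≤ φ (e n) then (1:ℝ) else -1 with hs
  set u : c0 := ∑ n ∈ S, s n • e n with hu
  have hnu : ‖u‖ ≤ 1 := by
    refine norm_comb_le S s 1 zero_le_one fun n _ => ?_
    by_cases h : 0 ≤ φ (e n) <;> simp [hs, h]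
  have hφu : φ u = ∑ n ∈ S, |φ (e n)| := by
    rw [hu, map_sum]
    refine Finset.sum_congr rfl fun n _ => ?_
    rw [map_smul, smul_eq_mul]
    by_cases h : 0 ≤ φ (e n)
    · rw [hs]; simp [h, abs_of_nonneg h]
    · push_neg at h
      rw [hs]; simp [not_le.2 h, abs_of_neg h]
  calc ∑ n ∈ S, |φ (e n)| = φ u := hφu.symm
    _ ≤ |φ u| := le_abs_self _
    _ ≤ ‖φ‖ * ‖u‖ := φ.le_opNorm u
    _ ≤ ‖φ‖ * 1 := mul_le_mul_of_nonneg_left hnu (norm_nonneg φ)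
    _ = ‖φ‖ := mul_one _

lemma filter_card_le (u : Finset ℕ) (n : ℕ) (hn : 1 ≤ n) :
    (u.filter (fun i => nu i = n)).card ≤ n := by
  calc (u.filter (fun i => nu i = n)).card ≤ (Finset.Ioc (T (n-1)) (T n)).card := by
        refine Finset.card_le_card fun i hi => ?_
        rw [Finset.mem_filter] at hi
        rw [Finset.mem_Ioc]
        exact (nu_block hn).1 hi.2
    _ = n := block_card n hn

lemma Y_wuc (φ : c0 →L[ℝ] ℝ) : Summable fun i => |φ (Y i)| := by
  refine summable_of_sum_le (c := ‖φ‖) (fun i => abs_nonneg _) (fun u => ?_)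
  have key : ∀ i, |φ (Y i)| = (fun n : ℕ => ((n:ℝ))⁻¹ * |φ (e n)|) (nu i) := by
    intro i
    rw [Y, map_smul, smul_eq_mul, abs_mul, abs_of_nonneg (by positivity : (0:ℝ) ≤ ((nu i:ℝ))⁻¹)]
  calc ∑ i ∈ u, |φ (Y i)| = ∑ i ∈ u, (fun n : ℕ => ((n:ℝ))⁻¹ * |φ (e n)|) (nu i) := by
        exact Finset.sum_congr rfl fun i _ => key i
    _ = ∑ n ∈ u.image nu, (u.filter (fun i => nu i = n)).card • (((n:ℝ))⁻¹ * |φ (e n)|) :=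
        by exact Finset.sum_comp (fun n : ℕ => ((n:ℝ))⁻¹ * |φ (e n)|) nu
    _ ≤ ∑ n ∈ u.image nu, |φ (e n)| := by
        refine Finset.sum_le_sum fun n _ => ?_
        rcases Nat.eq_zero_or_pos n with rfl | hn
        · simp [abs_nonneg]
        · rw [nsmul_eq_mul]
          calc ((u.filter (fun i => nu i = n)).card : ℝ) * (((n:ℝ))⁻¹ * |φ (e n)|)
              ≤ (n:ℝ) * (((n:ℝ))⁻¹ * |φ (e n)|) :=
                mul_le_mul_of_nonneg_right (by exact_mod_cast filter_card_le u n hn)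
                  (by positivity)
            _ = |φ (e n)| := by
                rw [← mul_assoc, mul_inv_cancel₀ (by positivity : ((n:ℝ)) ≠ 0), one_mul]
    _ ≤ ‖φ‖ := absSum_le φ _

lemma Y_not_summable : ¬ Summable Y := by
  intro hs
  rw [summable_iff_vanishing] at hs
  obtain ⟨s, hsb⟩ := hs (Metric.ball 0 1) (Metric.ball_mem_nhds 0 one_pos)
  set n : ℕ := s.sup id + 2 with hn
  have hdisj : Disjoint (Finset.Ioc (T (n-1)) (T n)) s := by
    rw [Finset.disjoint_left]
    intro i hi his
    rw [Finset.mem_Ioc] at hi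
    have h1 : i ≤ s.sup id := Finset.le_sup (f := id) his
    have h2 : n - 1 ≤ T (n-1) := le_T_self _
    omega
  have := hsb _ hdisj
  have heq : ∑ i ∈ Finset.Ioc (T (n-1)) (T n), Y i = e n := by
    have hcongr : ∀ i ∈ Finset.Ioc (T (n-1)) (T n), Y i = ((n:ℝ))⁻¹ • e n := by
      intro i hi
      rw [Finset.mem_Ioc] at hi
      rw [Y, (nu_block (by omega)).2 hi]
    rw [Finset.sum_congr rfl hcongr, Finset.sum_const, block_card n (by omega),
      ← Nat.cast_smul_eq_nsmul ℝ, smul_smul, mul_inv_cancel₀ (by positivity : ((n:ℝ)) ≠ 0), one_smul]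
  rw [heq, Metric.mem_ball, dist_zero_right, norm_e] at this
  exact lt_irrefl 1 this

def W {p : ℕ} (t : Fin p → Bool) (n : ℕ) : ℝ :=
  ∏ b : Fin p, (if t b && n.testBit (b:ℕ) then (-1:ℝ) else 1)

lemma abs_W {p : ℕ} (t : Fin p → Bool) (n : ℕ) : |W t n| = 1 := by
  rw [W, Finset.abs_prod]
  refine Finset.prod_eq_one fun b _ => ?_
  split <;> simp

lemma W_orth {p : ℕ} (m n : ℕ) (hm : m < 2^p) (hn : n < 2^p) :
    ∑ t : Fin p → Bool, W t m * W t n = if m = n then ((2^p : ℕ) : ℝ) else 0 := by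
  have step1 : ∀ t : Fin p → Bool, W t m * W t n =
      ∏ b : Fin p, ((if t b && m.testBit (b:ℕ) then (-1:ℝ) else 1) *
        (if t b && n.testBit (b:ℕ) then (-1:ℝ) else 1)) := by
    intro t; rw [W, W, ← Finset.prod_mul_distrib]
  rw [Finset.sum_congr rfl (fun t _ => step1 t)]
  have step2 : ∑ t : Fin p → Bool, ∏ b : Fin p,
      ((if t b && m.testBit (b:ℕ) then (-1:ℝ) else 1) *
        (if t b && n.testBit (b:ℕ) then (-1:ℝ) else 1)) =
      ∏ b : Fin p, ∑ x : Bool, ((if x && m.testBit (b:ℕ) then (-1:ℝ) else 1) *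
        (if x && n.testBit (b:ℕ) then (-1:ℝ) else 1)) := by
    symm
    rw [Finset.prod_univ_sum, Fintype.piFinset_univ]
  rw [step2]
  have step3 : ∀ b : Fin p, (∑ x : Bool, ((if x && m.testBit (b:ℕ) then (-1:ℝ) else 1) *
      (if x && n.testBit (b:ℕ) then (-1:ℝ) else 1))) =
      if m.testBit (b:ℕ) = n.testBit (b:ℕ) then 2 else 0 := by
    intro b
    rw [Fintype.sum_bool]
    cases hb1 : m.testBit (b:ℕ) <;> cases hb2 : n.testBit (b:ℕ) <;> norm_num
  rw [Finset.prod_congr rfl (fun b _ => step3 b)]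
  by_cases h : m = n
  · subst h
    simp [Finset.prod_const]
  · rw [if_neg h]
    have : ∃ b : ℕ, m.testBit b ≠ n.testBit b := by
      by_contra hc
      push_neg at hc
      exact h (Nat.eq_of_testBit_eq hc)
    obtain ⟨b, hb⟩ := this
    have hbp : b < p := by
      by_contra hbp
      push_neg at hbp
      rw [Nat.testBit_eq_false_of_lt (lt_of_lt_of_le hm (Nat.pow_le_pow_right (by norm_num) hbp)),
        Nat.testBit_eq_false_of_lt (lt_of_lt_of_le hn (Nat.pow_le_pow_right (by norm_num) hbp))] at hb
      exact hb rfl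
    exact Finset.prod_eq_zero (Finset.mem_univ (⟨b, hbp⟩ : Fin p)) (by simpa using hb)

def Wv {p : ℕ} (t : Fin p → Bool) : c0 := ∑ m ∈ Finset.range (2^p), W t m • e m

lemma norm_Wv_le {p : ℕ} (t : Fin p → Bool) : ‖Wv t‖ ≤ 1 :=
  norm_comb_le _ _ 1 zero_le_one (fun n _ => (abs_W t n).le)

open scoped TensorProduct

lemma projectiveSeminorm_sum_le {k : ℕ} {ι : Type*} (s : Finset ι)
    (f : ι → ⨂[ℝ] _ : Fin k, c0) :
    PiTensorProduct.projectiveSeminorm (∑ i ∈ s, f i) ≤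
      ∑ i ∈ s, PiTensorProduct.projectiveSeminorm (f i) := by
  induction s using Finset.cons_induction with
  | empty => simp
  | cons a s ha ih =>
      rw [Finset.sum_cons, Finset.sum_cons]
      exact le_trans (map_add_le_add _ _ _) (by linarith)

lemma key_expand (k p : ℕ) (a : ℕ → ℝ)
    (t : Fin k → (Fin p → Bool)) :
    PiTensorProduct.tprod ℝ (fun i : Fin (k+1) =>
        ∑ m ∈ Finset.range (2^p), (Fin.snoc (fun i m => W (t i) m)
          (fun m => a m * ∏ j : Fin k, W (t j) m) : Fin (k+1) → ℕ → ℝ) i m • e m) =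
      ∑ r ∈ Fintype.piFinset (fun _ : Fin (k+1) => Finset.range (2^p)),
        (∏ i : Fin (k+1), (Fin.snoc (fun i m => W (t i) m)
          (fun m => a m * ∏ j : Fin k, W (t j) m) : Fin (k+1) → ℕ → ℝ) i (r i)) •
          PiTensorProduct.tprod ℝ (fun i => e (r i)) := by
  rw [MultilinearMap.map_sum_finset (PiTensorProduct.tprod ℝ)]
  exact Finset.sum_congr rfl fun r _ => MultilinearMap.map_smul_univ _ _ _

lemma coeff_sum (k p : ℕ) (a : ℕ → ℝ) (r : Fin (k+1) → ℕ)
    (hr : ∀ i, r i < 2^p) :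
    ∑ t : Fin k → (Fin p → Bool),
      (∏ i : Fin (k+1), (Fin.snoc (fun i m => W (t i) m)
        (fun m => a m * ∏ j : Fin k, W (t j) m) : Fin (k+1) → ℕ → ℝ) i (r i)) =
    a (r (Fin.last k)) *
      (if ∀ i : Fin k, r i.castSucc = r (Fin.last k) then (((2^p:ℕ):ℝ))^k else 0) := by
  set q : ℝ := ((2^p : ℕ) : ℝ) with hqdef
  have step1 : ∀ t : Fin k → (Fin p → Bool),
      (∏ i : Fin (k+1), (Fin.snoc (fun i m => W (t i) m)
        (fun m => a m * ∏ j : Fin k, W (t j) m) : Fin (k+1) → ℕ → ℝ) i (r i)) =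
      a (r (Fin.last k)) *
        ∏ i : Fin k, (W (t i) (r i.castSucc) * W (t i) (r (Fin.last k))) := by
    intro t
    rw [Fin.prod_univ_castSucc]
    simp only [Fin.snoc_castSucc, Fin.snoc_last]
    rw [Finset.prod_mul_distrib]
    ring
  rw [Finset.sum_congr rfl (fun t _ => step1 t), ← Finset.mul_sum]
  congr 1
  have step2 : ∑ t : Fin k → (Fin p → Bool),
      ∏ i : Fin k, (W (t i) (r i.castSucc) * W (t i) (r (Fin.last k))) =
      ∏ i : Fin k, ∑ s : Fin p → Bool, (W s (r i.castSucc) * W s (r (Fin.last k))) := by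
    symm
    rw [Finset.prod_univ_sum, Fintype.piFinset_univ]
  rw [step2]
  have step3 : ∀ i : Fin k, (∑ s : Fin p → Bool, (W s (r i.castSucc) * W s (r (Fin.last k)))) =
      if r i.castSucc = r (Fin.last k) then q else 0 :=
    fun i => W_orth _ _ (hr _) (hr _)
  rw [Finset.prod_congr rfl (fun i _ => step3 i)]
  by_cases h : ∀ i : Fin k, r i.castSucc = r (Fin.last k)
  · rw [if_pos h, Finset.prod_congr rfl (fun i _ => if_pos (h i)), Finset.prod_const]
    simp
  · rw [if_neg h]
    push_neg at h
    obtain ⟨i, hi⟩ := h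
    exact Finset.prod_eq_zero (Finset.mem_univ i) (if_neg hi)

lemma key_identity (k p : ℕ) (a : ℕ → ℝ) :
    ∑ n ∈ Finset.range (2^p), a n • PiTensorProduct.tprod ℝ (fun _ : Fin (k+1) => e n) =
      ((((2^p : ℕ) : ℝ))⁻¹)^k • ∑ t : Fin k → (Fin p → Bool),
        PiTensorProduct.tprod ℝ (fun i : Fin (k+1) =>
          ∑ m ∈ Finset.range (2^p), (Fin.snoc (fun i m => W (t i) m)
            (fun m => a m * ∏ j : Fin k, W (t j) m) : Fin (k+1) → ℕ → ℝ) i m • e m) := by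
  classical
  set q : ℝ := ((2^p : ℕ) : ℝ) with hqdef
  have hq : q ≠ 0 := by positivity
  rw [Finset.sum_congr rfl (fun t _ => key_expand k p a t)]
  rw [Finset.sum_comm]
  rw [Finset.smul_sum]
  have step4 : ∀ r ∈ Fintype.piFinset (fun _ : Fin (k+1) => Finset.range (2^p)),
      (q⁻¹)^k • ∑ t : Fin k → (Fin p → Bool),
        (∏ i : Fin (k+1), (Fin.snoc (fun i m => W (t i) m)
          (fun m => a m * ∏ j : Fin k, W (t j) m) : Fin (k+1) → ℕ → ℝ) i (r i)) •
          PiTensorProduct.tprod ℝ (fun i => e (r i)) =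
      (if ∀ i : Fin k, r i.castSucc = r (Fin.last k) then a (r (Fin.last k)) else 0) •
        PiTensorProduct.tprod ℝ (fun i => e (r i)) := by
    intro r hr
    have hrlt : ∀ i, r i < 2^p := by
      intro i
      have := Fintype.mem_piFinset.1 hr i
      simpa [Finset.mem_range] using this
    rw [← Finset.sum_smul, smul_smul, coeff_sum k p a r hrlt]
    congr 1
    by_cases h : ∀ i : Fin k, r i.castSucc = r (Fin.last k)
    · rw [if_pos h, if_pos h, inv_pow, mul_comm (a _), ← mul_assoc,
        inv_mul_cancel₀ (pow_ne_zero k hq), one_mul]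
    · rw [if_neg h, if_neg h, mul_zero, mul_zero]
  rw [Finset.sum_congr rfl step4]
  -- now reduce to sum over constants
  symm
  set F : (Fin (k+1) → ℕ) → (⨂[ℝ] _ : Fin (k+1), c0) := fun r =>
    (if ∀ i : Fin k, r i.castSucc = r (Fin.last k) then a (r (Fin.last k)) else 0) •
      PiTensorProduct.tprod ℝ (fun i => e (r i)) with hF
  show ∑ r ∈ Fintype.piFinset (fun _ : Fin (k+1) => Finset.range (2^p)), F r = _
  have hsub : (Finset.range (2^p)).image (fun n (_ : Fin (k+1)) => n) ⊆
      Fintype.piFinset (fun _ : Fin (k+1) => Finset.range (2^p)) := by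
    intro r hr
    rw [Finset.mem_image] at hr
    obtain ⟨n, hn, rfl⟩ := hr
    exact Fintype.mem_piFinset.2 fun i => hn
  rw [← Finset.sum_subset hsub ?hzero]
  · rw [Finset.sum_image ?hinj]
    · refine Finset.sum_congr rfl fun n _ => ?_
      rw [hF]
      simp
    · intro x _ y _ hxy
      exact congrFun hxy 0
  · intro r hr hnr
    have hcond : ¬ ∀ i : Fin k, r i.castSucc = r (Fin.last k) := by
      intro hcond
      apply hnr
      rw [Finset.mem_image]
      refine ⟨r (Fin.last k), ?_, ?_⟩
      · have := Fintype.mem_piFinset.1 hr (Fin.last k)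
        exact this
      · funext i
        induction i using Fin.lastCases with
        | last => rfl
        | cast j => exact (hcond j).symm
    simp only [hF, if_neg hcond, zero_smul]

lemma key_bound (k p : ℕ) (a : ℕ → ℝ) (C : ℝ) (hC : 0 ≤ C)
    (ha : ∀ n ∈ Finset.range (2^p), |a n| ≤ C) :
    PiTensorProduct.projectiveSeminorm
      (∑ n ∈ Finset.range (2^p), a n • PiTensorProduct.tprod ℝ (fun _ : Fin (k+1) => e n)) ≤ C := by
  classical
  set q : ℝ := ((2^p : ℕ) : ℝ) with hqdef
  have hq0 : 0 < q := by positivity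
  rw [key_identity k p a, map_smul_eq_mul]
  have hnorm : ∀ t : Fin k → (Fin p → Bool),
      PiTensorProduct.projectiveSeminorm (PiTensorProduct.tprod ℝ (fun i : Fin (k+1) =>
        ∑ m ∈ Finset.range (2^p), (Fin.snoc (fun i m => W (t i) m)
          (fun m => a m * ∏ j : Fin k, W (t j) m) : Fin (k+1) → ℕ → ℝ) i m • e m)) ≤ C := by
    intro t
    refine le_trans (PiTensorProduct.projectiveSeminorm_tprod_le _) ?_
    rw [Fin.prod_univ_castSucc]
    have h1 : ∀ j : Fin k, ‖∑ m ∈ Finset.range (2^p), (Fin.snoc (fun i m => W (t i) m)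
        (fun m => a m * ∏ j : Fin k, W (t j) m) : Fin (k+1) → ℕ → ℝ) j.castSucc m • e m‖ ≤ 1 := by
      intro j
      simp only [Fin.snoc_castSucc]
      exact norm_comb_le _ _ 1 zero_le_one (fun m _ => (abs_W (t j) m).le)
    have h2 : ‖∑ m ∈ Finset.range (2^p), (Fin.snoc (fun i m => W (t i) m)
        (fun m => a m * ∏ j : Fin k, W (t j) m) : Fin (k+1) → ℕ → ℝ) (Fin.last k) m • e m‖ ≤ C := by
      simp only [Fin.snoc_last]
      refine norm_comb_le _ _ C hC (fun m hm => ?_)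
      rw [abs_mul, Finset.abs_prod]
      rw [Finset.prod_congr rfl (fun j _ => abs_W (t j) m), Finset.prod_const_one, mul_one]
      exact ha m hm
    calc (∏ j : Fin k, ‖_‖) * ‖_‖ ≤ 1 * C := by
          refine mul_le_mul ?_ h2 (norm_nonneg _) zero_le_one
          refine Finset.prod_le_one (fun j _ => norm_nonneg _) (fun j _ => h1 j)
      _ = C := one_mul C
  calc ‖(q⁻¹)^k‖ * PiTensorProduct.projectiveSeminorm (∑ t : Fin k → (Fin p → Bool), _)
      ≤ ‖(q⁻¹)^k‖ * ∑ t : Fin k → (Fin p → Bool), C := by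
        refine mul_le_mul_of_nonneg_left ?_ (norm_nonneg _)
        exact le_trans (projectiveSeminorm_sum_le _ _) (Finset.sum_le_sum (fun t _ => hnorm t))
    _ = C := by
        rw [Finset.sum_const, Finset.card_univ]
        have hcard : Fintype.card (Fin k → (Fin p → Bool)) = (2^p)^k := by
          rw [Fintype.card_fun]
          simp [Fintype.card_fun]
        rw [hcard, nsmul_eq_mul, norm_pow, norm_inv, Real.norm_eq_abs, abs_of_pos hq0]
        push_cast
        rw [inv_pow]
        have hqk : q ^ k = ((2:ℝ) ^ p) ^ k := by rw [hqdef]; push_cast; ring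
        rw [hqk, inv_mul_cancel_left₀ (by positivity)]


open scoped TensorProduct

open PiTensorProduct in
/-- There is a w.u.C. non-unconditionally-convergent series `∑ yᵢ` in `c₀` whose diagonal
tensors form an unconditionally Cauchy series for the projective seminorm on `⊗^k c₀`, `k ≥ 2`;
one such is given by `yᵢ = eₙ / n` for `n(n−1)/2 < i ≤ n(n+1)/2`. -/
theorem exists_wuc_not_uc_diagonal_tensors_uc :
    ∃ y : ℕ → c0,
      (∀ i n : ℕ, n * (n - 1) / 2 < i → i ≤ n * (n + 1) / 2 → y i = ((n : ℝ))⁻¹ • e n) ∧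
      WUC y ∧ ¬ Summable y ∧
      ∀ k : ℕ, 2 ≤ k → ∀ ε : ℝ, 0 < ε → ∃ N : ℕ, ∀ F : Finset ℕ,
        (∀ j ∈ F, N < j) →
        projectiveSeminorm (∑ j ∈ F, tprod ℝ (fun _ : Fin k => y j)) < ε := by
  classical
  refine ⟨Y, ?_, Y_wuc, Y_not_summable, ?_⟩
  · intro i n h1 h2
    rw [Y, nu_eq h1 h2]
  · intro k hk ε hε
    obtain ⟨m, rfl⟩ : ∃ m, k = m + 1 := ⟨k-1, by omega⟩
    have hm : 1 ≤ m := by omega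
    set M : ℕ := ⌈ε⁻¹⌉₊ + 1 with hM
    have hMpos : (0:ℝ) < M := by
      have : 0 < M := Nat.succ_pos _
      exact_mod_cast this
    have hMε : ((M:ℝ))⁻¹ < ε := by
      have h1 : ε⁻¹ < (M:ℝ) := by
        refine lt_of_le_of_lt (Nat.le_ceil _) ?_
        exact_mod_cast Nat.lt_succ_self _
      have h2 : (M:ℝ)⁻¹ < (ε⁻¹)⁻¹ := by gcongr
      rwa [inv_inv] at h2
    refine ⟨T M, fun F hF => ?_⟩
    set p : ℕ := (F.image nu).sup id with hp
    set a : ℕ → ℝ := fun n => if n ∈ F.image nu then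
      (((F.filter (fun i => nu i = n)).card : ℝ) * (((n:ℝ))⁻¹)^(m+1)) else 0 with ha
    have himg : F.image nu ⊆ Finset.range (2^p) := by
      intro n hn
      rw [Finset.mem_range]
      exact lt_of_le_of_lt (Finset.le_sup (f := id) hn) (Nat.lt_two_pow_self (n := p))
    have step1 : ∀ j ∈ F, tprod ℝ (fun _ : Fin (m+1) => Y j) =
        (fun n : ℕ => ((((n:ℝ))⁻¹)^(m+1)) • tprod ℝ (fun _ : Fin (m+1) => e n)) (nu j) := by
      intro j _
      show tprod ℝ (fun _ : Fin (m+1) => ((nu j : ℝ))⁻¹ • e (nu j)) = _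
      rw [MultilinearMap.map_smul_univ (PiTensorProduct.tprod ℝ) (fun _ : Fin (m+1) => ((nu j : ℝ))⁻¹)
        (fun _ => e (nu j))]
      simp
    have hz2 : ∑ j ∈ F, tprod ℝ (fun _ : Fin (m+1) => Y j) =
        ∑ n ∈ Finset.range (2^p), a n • tprod ℝ (fun _ : Fin (m+1) => e n) := by
      rw [Finset.sum_congr rfl step1]
      calc ∑ j ∈ F, (fun n : ℕ => ((((n:ℝ))⁻¹)^(m+1)) • tprod ℝ (fun _ : Fin (m+1) => e n)) (nu j)
          = ∑ n ∈ F.image nu, (F.filter (fun i => nu i = n)).card •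
              (((((n:ℝ))⁻¹)^(m+1)) • tprod ℝ (fun _ : Fin (m+1) => e n)) := by
            exact Finset.sum_comp
              (fun n : ℕ => ((((n:ℝ))⁻¹)^(m+1)) • tprod ℝ (fun _ : Fin (m+1) => e n)) nu
        _ = ∑ n ∈ F.image nu, a n • tprod ℝ (fun _ : Fin (m+1) => e n) := by
            refine Finset.sum_congr rfl fun n hn => ?_
            rw [ha]
            simp only [if_pos hn]
            rw [← Nat.cast_smul_eq_nsmul ℝ, smul_smul]
        _ = ∑ n ∈ Finset.range (2^p), a n • tprod ℝ (fun _ : Fin (m+1) => e n) := by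
            refine Finset.sum_subset himg fun n _ hnn => ?_
            simp only [ha, if_neg hnn, zero_smul]
    have hbound : ∀ n ∈ Finset.range (2^p), |a n| ≤ (((M:ℝ))+1)⁻¹ := by
      intro n hn
      by_cases h : n ∈ F.image nu
      · obtain ⟨j, hjF, rfl⟩ := Finset.mem_image.1 h
        have hjN : T M < j := hF j hjF
        have hMn : M < nu j := nu_pos_gt hjN
        have hn1 : 1 ≤ nu j := by omega
        have hnne : ((nu j : ℝ)) ≠ 0 := by
          have : (0:ℝ) < nu j := by exact_mod_cast hn1
          positivity
        rw [ha]
        simp only [if_pos h]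
        rw [abs_of_nonneg (by positivity)]
        calc ((F.filter (fun i => nu i = nu j)).card : ℝ) * ((((nu j:ℝ))⁻¹)^(m+1))
            ≤ (nu j : ℝ) * ((((nu j:ℝ))⁻¹)^(m+1)) := by
              refine mul_le_mul_of_nonneg_right ?_ (by positivity)
              exact_mod_cast filter_card_le F (nu j) hn1
          _ = (((nu j:ℝ))⁻¹)^m := by
              rw [pow_succ, mul_comm ((((nu j:ℝ))⁻¹)^m) _, ← mul_assoc,
                mul_inv_cancel₀ hnne, one_mul]
          _ ≤ ((nu j:ℝ))⁻¹ := by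
              refine pow_le_of_le_one (by positivity) ?_ (by omega)
              rw [inv_le_one_iff₀]
              right
              exact_mod_cast hn1
          _ ≤ (((M:ℝ))+1)⁻¹ := by
              have := one_div_le_one_div_of_le (show (0:ℝ) < (M:ℝ)+1 by positivity)
                (show ((M:ℝ)+1) ≤ (nu j : ℝ) by exact_mod_cast hMn)
              simpa [one_div] using this
      · rw [ha]
        simp only [if_neg h, abs_zero]
        positivity
    calc projectiveSeminorm (∑ j ∈ F, tprod ℝ (fun _ : Fin (m+1) => Y j))
        ≤ (((M:ℝ))+1)⁻¹ := by
          rw [hz2]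
          exact key_bound m p a _ (by positivity) hbound
      _ ≤ ((M:ℝ))⁻¹ := by
          have := one_div_le_one_div_of_le hMpos (show (M:ℝ) ≤ (M:ℝ)+1 by linarith)
          simpa [one_div] using this
      _ < ε := hMε
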